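/- For real numbers 0 < a < b, the ratio of Gamma values |Γ(a + iy)/Γ(b + iy)| is bounded uniformly in y ∈ ℝ by a constant depending only on a and b. -/

import Mathlib

open Complex intervalIntegral MeasureTheory

/-- For `0 < a < b`, `|Γ(a + iy)/Γ(b + iy)|` is bounded uniformly in `y ∈ ℝ`. -/
theorem stmt_8 (a b : ℝ) (ha : 0 < a) (hab : a < b) :
    ∃ C : ℝ, ∀ y : ℝ,
      ‖Complex.Gamma ((a : ℂ) + y * Complex.I) /
        Complex.Gamma ((b : ℂ) + y * Complex.I)‖ ≤ C := by
  have hs : (0:ℝ) < b - a := by linarith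
  refine ⟨(∫ x in (0:ℝ)..1, x ^ (a - 1) * (1 - x) ^ (b - a - 1)) /
      ‖Complex.Gamma ((b : ℝ) - a)‖, fun y => ?_⟩
  set u : ℂ := (a : ℂ) + y * Complex.I with hu
  have hur : 0 < re u := by simp [hu, ha]
  have hsr : 0 < re ((b : ℂ) - a) := by simpa using hs
  have hkey := Complex.Gamma_mul_Gamma_eq_betaIntegral hur hsr
  have hadd : u + ((b : ℂ) - a) = (b : ℂ) + y * Complex.I := by push_cast [hu]; ring
  rw [hadd] at hkey
  have hG1 : Complex.Gamma ((b : ℂ) - a) ≠ 0 := Complex.Gamma_ne_zero_of_re_pos hsr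
  have hG2 : Complex.Gamma ((b : ℂ) + y * Complex.I) ≠ 0 :=
    Complex.Gamma_ne_zero_of_re_pos (by simp [lt_trans ha hab])
  have hdiv : Complex.Gamma u / Complex.Gamma ((b : ℂ) + y * Complex.I)
      = Complex.betaIntegral u ((b : ℂ) - a) / Complex.Gamma ((b : ℂ) - a) := by
    field_simp
    linear_combination hkey
  rw [hdiv, norm_div]
  have hcast : ((b:ℝ) - a : ℂ) = (b:ℂ) - a := by push_cast; ring
  rw [← hcast]
  gcongr ?_ / _
  rw [hcast]
  refine le_trans intervalIntegral.norm_integral_le_integral_norm_uIoc ?_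
  rw [Set.uIoc_of_le zero_le_one, intervalIntegral.integral_of_le zero_le_one]
  refine le_of_eq (MeasureTheory.setIntegral_congr_fun measurableSet_Ioc fun x hx => ?_)
  obtain ⟨h0, h1⟩ := hx
  have h1' : (0:ℝ) ≤ 1 - x := by linarith
  have e2 : ((1:ℂ) - (x:ℝ)) = ((1 - x : ℝ) : ℂ) := by push_cast; ring
  have e3 : ((b:ℂ) - a - 1) = ((b - a - 1 : ℝ) : ℂ) := by push_cast; ring
  rw [norm_mul,
    Complex.norm_cpow_eq_rpow_re_of_pos h0, e2, e3, ← Complex.ofReal_cpow h1',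
    Complex.norm_of_nonneg (Real.rpow_nonneg h1' _)]
  congr 1
  simp [hu]
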